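/- Let f(t) = ∫_t^∞ (e^{-x}/x) dx be the exponential integral for t > 0. Then f(t) = -log(t) - γ - ∫_0^t ((e^{-x}-1)/x) dx, where γ is the Euler–Mascheroni constant. -/

import Mathlib

open MeasureTheory Real

section EIproofs
open Set Filter

-- integrability of exp(-x)/x on Ioi t
lemma EI_int_f {t : ℝ} (ht : 0 < t) :
    IntegrableOn (fun x => Real.exp (-x) / x) (Set.Ioi t) := by
  have h1 : IntegrableOn (fun x => Real.exp (-x) * t⁻¹) (Set.Ioi t) := by
    have := (exp_neg_integrableOn_Ioi t one_pos).mul_const t⁻¹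
    simp only [neg_mul, one_mul] at this
    exact this
  refine h1.integrable.mono ?_ ?_
  · exact (Measurable.div (by fun_prop) measurable_id).aestronglyMeasurable
  · filter_upwards [ae_restrict_mem measurableSet_Ioi] with x hx
    have hx' : t < x := hx
    have hx0 : 0 < x := ht.trans hx'
    rw [Real.norm_eq_abs, Real.norm_eq_abs, abs_of_pos (by positivity), abs_of_pos (by positivity)]
    rw [div_eq_mul_inv]
    exact mul_le_mul_of_nonneg_left (by rw [inv_le_inv₀ hx0 ht]; exact hx'.le) (exp_pos _).le

-- interval integrability of exp(-x)/x away from 0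
lemma EI_int_f' {a b : ℝ} (ha : 0 < a) (hb : 0 < b) :
    IntervalIntegrable (fun x => Real.exp (-x) / x) volume a b := by
  apply ContinuousOn.intervalIntegrable
  apply ContinuousOn.div (by fun_prop) continuousOn_id
  intro x hx
  have : min a b ≤ x := (Set.mem_uIcc.1 hx).elim (fun h => le_trans (min_le_left _ _) h.1)
    (fun h => le_trans (min_le_right _ _) h.1)
  have : 0 < x := lt_of_lt_of_le (lt_min ha hb) this
  simpa using this.ne'

lemma EI_g_bound {x : ℝ} (hx : 0 ≤ x) : ‖(Real.exp (-x) - 1) / x‖ ≤ 1 := by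
  rcases eq_or_lt_of_le hx with h | h
  · simp [← h]
  · rw [Real.norm_eq_abs, abs_div, abs_of_pos h, div_le_one h, abs_le]
    constructor
    · nlinarith [Real.add_one_le_exp (-x)]
    · nlinarith [Real.exp_zero, Real.exp_le_exp.2 (neg_nonpos.2 hx)]

lemma EI_int_g (a b : ℝ) (ha : 0 ≤ a) (hb : 0 ≤ b) :
    IntervalIntegrable (fun x => (Real.exp (-x) - 1) / x) volume a b := by
  constructor <;>
  · apply Measure.integrableOn_of_bounded (M := 1) (by simp)
      ((Measurable.div (by fun_prop) measurable_id).aestronglyMeasurable)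
    filter_upwards [ae_restrict_mem measurableSet_Ioc] with x hx
    refine EI_g_bound (le_trans ?_ hx.1.le)
    first
      | exact ha
      | exact hb

lemma EI_int_L1 : IntegrableOn (fun x => Real.log x * Real.exp (-x)) (Set.Ioi 1) := by
  have h2 : IntegrableOn (fun x => Real.exp (-x) * x ^ ((2:ℝ) - 1)) (Set.Ioi 0) :=
    Real.GammaIntegral_convergent (by norm_num)
  refine ((h2.mono_set (Set.Ioi_subset_Ioi zero_le_one)).integrable.mono ?_ ?_)
  · exact ((measurable_log.mul (by fun_prop))).aestronglyMeasurable
  · filter_upwards [ae_restrict_mem measurableSet_Ioi] with x hx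
    have hx1 : (1:ℝ) < x := hx
    have hx0 : (0:ℝ) < x := zero_lt_one.trans hx1
    have hlog : 0 ≤ Real.log x := Real.log_nonneg hx1.le
    rw [Real.norm_eq_abs, Real.norm_eq_abs, abs_of_nonneg (by positivity),
      abs_of_nonneg (by positivity), show ((2:ℝ)-1) = 1 by norm_num, Real.rpow_one, mul_comm]
    exact mul_le_mul_of_nonneg_left
      ((Real.log_le_sub_one_of_pos hx0).trans (by linarith)) (Real.exp_pos _).le

lemma EI_log_bound {x : ℝ} (hx0 : 0 < x) (hx1 : x ≤ 1) :
    |Real.log x| ≤ 2 * x ^ (-(1:ℝ)/2) := by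
  have hlog : Real.log x ≤ 0 := Real.log_nonpos hx0.le hx1
  rw [abs_of_nonpos hlog]
  have h1 : Real.log (x ^ (-(1:ℝ)/2)) ≤ x ^ (-(1:ℝ)/2) - 1 :=
    Real.log_le_sub_one_of_pos (Real.rpow_pos_of_pos hx0 _)
  rw [Real.log_rpow hx0] at h1
  have h2 : (0:ℝ) < x ^ (-(1:ℝ)/2) := Real.rpow_pos_of_pos hx0 _
  nlinarith

lemma EI_int_L0 : IntegrableOn (fun x => Real.log x * Real.exp (-x)) (Set.Ioc 0 1) := by
  have h2 : IntervalIntegrable (fun x : ℝ => x ^ (-(1:ℝ)/2)) volume 0 1 :=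
    intervalIntegral.intervalIntegrable_rpow' (by norm_num)
  have h3 : IntegrableOn (fun x : ℝ => 2 * x ^ (-(1:ℝ)/2)) (Set.Ioc 0 1) :=
    ((h2.1).integrable.const_mul 2)
  refine h3.integrable.mono ?_ ?_
  · exact ((measurable_log.mul (by fun_prop))).aestronglyMeasurable
  · filter_upwards [ae_restrict_mem measurableSet_Ioc] with x hx
    have hx0 : (0:ℝ) < x := hx.1
    calc ‖Real.log x * Real.exp (-x)‖ ≤ |Real.log x| * 1 := by
          rw [norm_mul, Real.norm_eq_abs, Real.norm_eq_abs]
          exact mul_le_mul_of_nonneg_left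
            (by rw [abs_of_pos (Real.exp_pos _)]; exact Real.exp_le_one_iff.2 (by linarith)) (abs_nonneg _)
      _ ≤ 2 * x ^ (-(1:ℝ)/2) := by rw [mul_one]; exact EI_log_bound hx0 hx.2
      _ ≤ ‖2 * x ^ (-(1:ℝ)/2)‖ := le_abs_self _

lemma EI_K1 {t : ℝ} (ht : 0 < t) :
    (∫ x in Set.Ioi t, Real.exp (-x) / x) + Real.log t
        + (∫ x in (0:ℝ)..t, (Real.exp (-x) - 1) / x)
      = (∫ x in Set.Ioi 1, Real.exp (-x) / x)
        + (∫ x in (0:ℝ)..1, (Real.exp (-x) - 1) / x) := by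
  have hF : (∫ x in Set.Ioi t, Real.exp (-x) / x)
      = (∫ x in t..1, Real.exp (-x) / x) + ∫ x in Set.Ioi 1, Real.exp (-x) / x := by
    rcases le_total t 1 with h | h
    · rw [← Set.Ioc_union_Ioi_eq_Ioi h,
        setIntegral_union (Set.Ioc_disjoint_Ioi le_rfl) measurableSet_Ioi
          ((EI_int_f ht).mono_set Set.Ioc_subset_Ioi_self) (EI_int_f zero_lt_one),
        intervalIntegral.integral_of_le h]
    · rw [← Set.Ioc_union_Ioi_eq_Ioi h,
        setIntegral_union (Set.Ioc_disjoint_Ioi le_rfl) measurableSet_Ioi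
          ((EI_int_f zero_lt_one).mono_set Set.Ioc_subset_Ioi_self) (EI_int_f ht),
        intervalIntegral.integral_symm, intervalIntegral.integral_of_le h]
      ring
  have hG : (∫ x in (0:ℝ)..t, (Real.exp (-x) - 1) / x)
      = (∫ x in (0:ℝ)..1, (Real.exp (-x) - 1) / x)
        + ∫ x in (1:ℝ)..t, (Real.exp (-x) - 1) / x :=
    (intervalIntegral.integral_add_adjacent_intervals
      (EI_int_g 0 1 le_rfl zero_le_one) (EI_int_g 1 t zero_le_one ht.le)).symm
  have key : (∫ x in t..1, Real.exp (-x) / x)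
      - (∫ x in t..1, (Real.exp (-x) - 1) / x) = -Real.log t := by
    rw [← intervalIntegral.integral_sub (EI_int_f' ht zero_lt_one)
      (EI_int_g t 1 ht.le zero_le_one)]
    have h0 : (0:ℝ) ∉ Set.uIcc t 1 :=
      Set.notMem_uIcc_of_lt ht zero_lt_one
    have : ∀ x ∈ Set.uIcc t 1,
        Real.exp (-x) / x - (Real.exp (-x) - 1) / x = 1 / x := by
      intro x hx
      have hx0 : x ≠ 0 := fun h => h0 (h ▸ hx)
      field_simp
      ring
    rw [intervalIntegral.integral_congr this, integral_one_div h0, Real.log_div one_ne_zero ht.ne',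
      Real.log_one]
    ring
  have hswap : (∫ x in (1:ℝ)..t, (Real.exp (-x) - 1) / x)
      = -∫ x in t..1, (Real.exp (-x) - 1) / x := by
    rw [intervalIntegral.integral_symm]
  rw [hF, hG, hswap]
  linarith [key]

lemma EI_ibp (R : ℝ) (hR : 1 ≤ R) :
    (∫ x in (1:ℝ)..R, Real.log x * Real.exp (-x))
      = -(Real.exp (-R) * Real.log R) + ∫ x in (1:ℝ)..R, Real.exp (-x) / x := by
  have hpos : ∀ x ∈ Set.uIcc (1:ℝ) R, (0:ℝ) < x := by
    intro x hx
    rw [Set.uIcc_of_le hR] at hx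
    linarith [hx.1]
  have hu : ∀ x ∈ Set.uIcc (1:ℝ) R, HasDerivAt Real.log (1 / x) x := by
    intro x hx
    simpa [one_div] using Real.hasDerivAt_log (hpos x hx).ne'
  have hv : ∀ x ∈ Set.uIcc (1:ℝ) R, HasDerivAt (fun y => -Real.exp (-y)) (Real.exp (-x)) x := by
    intro x _
    have h1 : HasDerivAt (fun y : ℝ => Real.exp (-y)) (-Real.exp (-x)) x := by
      simpa using (hasDerivAt_neg x).exp
    simpa using h1.fun_neg
  have hiu : IntervalIntegrable (fun x : ℝ => 1 / x) volume 1 R := by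
    apply ContinuousOn.intervalIntegrable
    exact ContinuousOn.div continuousOn_const continuousOn_id (fun x hx => (hpos x hx).ne')
  have hiv : IntervalIntegrable (fun x : ℝ => Real.exp (-x)) volume 1 R :=
    (by fun_prop : Continuous fun x : ℝ => Real.exp (-x)).intervalIntegrable 1 R
  have := intervalIntegral.integral_mul_deriv_eq_deriv_mul hu hv hiu hiv
  rw [this, Real.log_one]
  rw [show (∫ x in (1:ℝ)..R, 1 / x * -Real.exp (-x)) = -∫ x in (1:ℝ)..R, Real.exp (-x) / x by
    rw [← intervalIntegral.integral_neg]
    apply intervalIntegral.integral_congr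
    intro x hx
    field_simp]
  ring

lemma EI_K2 : (∫ x in Set.Ioi 1, Real.exp (-x) / x)
    = ∫ x in Set.Ioi 1, Real.log x * Real.exp (-x) := by
  have T1 : Tendsto (fun R => ∫ x in (1:ℝ)..R, Real.log x * Real.exp (-x)) atTop
      (nhds (∫ x in Set.Ioi 1, Real.log x * Real.exp (-x))) :=
    intervalIntegral_tendsto_integral_Ioi 1 EI_int_L1 tendsto_id
  have T2 : Tendsto (fun R => ∫ x in (1:ℝ)..R, Real.exp (-x) / x) atTop
      (nhds (∫ x in Set.Ioi 1, Real.exp (-x) / x)) :=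
    intervalIntegral_tendsto_integral_Ioi 1 (EI_int_f zero_lt_one) tendsto_id
  have T3 : Tendsto (fun R => -(Real.exp (-R) * Real.log R)) atTop (nhds 0) := by
    rw [← neg_zero]
    apply Tendsto.neg
    apply squeeze_zero_norm' (a := fun R => R ^ 1 * Real.exp (-R))
    · filter_upwards [eventually_ge_atTop (1:ℝ)] with R hR
      rw [Real.norm_eq_abs, abs_mul, abs_of_pos (Real.exp_pos _),
        abs_of_nonneg (Real.log_nonneg hR), pow_one, mul_comm]
      exact mul_le_mul_of_nonneg_right
        ((Real.log_le_sub_one_of_pos (by linarith)).trans (by linarith)) (Real.exp_pos _).le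
    · exact Real.tendsto_pow_mul_exp_neg_atTop_nhds_zero 1
  have T4 : Tendsto (fun R => -(Real.exp (-R) * Real.log R) + ∫ x in (1:ℝ)..R, Real.exp (-x) / x)
      atTop (nhds (0 + ∫ x in Set.Ioi 1, Real.exp (-x) / x)) := T3.add T2
  rw [zero_add] at T4
  refine tendsto_nhds_unique T4 (T1.congr' ?_)
  filter_upwards [eventually_ge_atTop (1:ℝ)] with R hR
  exact EI_ibp R hR

lemma EI_ibp0 (ε : ℝ) (hε : 0 < ε) (hε1 : ε ≤ 1) :
    (∫ x in ε..(1:ℝ), Real.log x * Real.exp (-x))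
      = -(Real.log ε * (1 - Real.exp (-ε))) + ∫ x in ε..(1:ℝ), (Real.exp (-x) - 1) / x := by
  have hpos : ∀ x ∈ Set.uIcc ε (1:ℝ), (0:ℝ) < x := by
    intro x hx
    rw [Set.uIcc_of_le hε1] at hx
    linarith [hx.1]
  have hu : ∀ x ∈ Set.uIcc ε (1:ℝ), HasDerivAt Real.log (1 / x) x := by
    intro x hx
    simpa [one_div] using Real.hasDerivAt_log (hpos x hx).ne'
  have hv : ∀ x ∈ Set.uIcc ε (1:ℝ),
      HasDerivAt (fun y => 1 - Real.exp (-y)) (Real.exp (-x)) x := by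
    intro x _
    have h1 : HasDerivAt (fun y : ℝ => Real.exp (-y)) (-Real.exp (-x)) x := by
      simpa using (hasDerivAt_neg x).exp
    simpa using (h1.const_sub 1)
  have hiu : IntervalIntegrable (fun x : ℝ => 1 / x) volume ε 1 := by
    apply ContinuousOn.intervalIntegrable
    exact ContinuousOn.div continuousOn_const continuousOn_id (fun x hx => (hpos x hx).ne')
  have hiv : IntervalIntegrable (fun x : ℝ => Real.exp (-x)) volume ε 1 :=
    (by fun_prop : Continuous fun x : ℝ => Real.exp (-x)).intervalIntegrable ε 1
  have := intervalIntegral.integral_mul_deriv_eq_deriv_mul hu hv hiu hiv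
  rw [this, Real.log_one]
  rw [show (∫ x in ε..(1:ℝ), 1 / x * (1 - Real.exp (-x)))
      = -∫ x in ε..(1:ℝ), (Real.exp (-x) - 1) / x by
    rw [← intervalIntegral.integral_neg]
    apply intervalIntegral.integral_congr
    intro x hx
    have := (hpos x hx).ne'
    field_simp
    ring]
  ring

lemma EI_K3 : (∫ x in (0:ℝ)..1, (Real.exp (-x) - 1) / x)
    = ∫ x in Set.Ioc (0:ℝ) 1, Real.log x * Real.exp (-x) := by
  set ε : ℕ → ℝ := fun n => ((n : ℝ) + 1)⁻¹ with hεdef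
  have hεpos : ∀ n, 0 < ε n := fun n => by positivity
  have hε1 : ∀ n, ε n ≤ 1 := fun n => by
    rw [hεdef]
    rw [inv_le_one₀ (by positivity)]
    simp [Nat.cast_nonneg]
  have hεto : Tendsto ε atTop (nhdsWithin 0 (Set.Ioi 0)) := by
    rw [tendsto_nhdsWithin_iff]
    constructor
    · simpa using tendsto_one_div_add_atTop_nhds_zero_nat (𝕜 := ℝ)
    · exact Eventually.of_forall fun n => hεpos n
  -- limit of the set integrals
  have hmono : Monotone (fun n => Set.Ioc (ε n) 1) := by
    intro n m hnm
    apply Set.Ioc_subset_Ioc_left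
    rw [hεdef]
    apply inv_anti₀ (by positivity)
    have : (n:ℝ) ≤ m := Nat.cast_le.2 hnm
    linarith
  have hunion : (⋃ n, Set.Ioc (ε n) 1) = Set.Ioc (0:ℝ) 1 := by
    ext x
    simp only [Set.mem_iUnion, Set.mem_Ioc]
    constructor
    · rintro ⟨n, h1, h2⟩
      exact ⟨(hεpos n).trans h1, h2⟩
    · rintro ⟨h1, h2⟩
      obtain ⟨n, hn⟩ := exists_nat_gt x⁻¹
      refine ⟨n, ?_, h2⟩
      rw [hεdef]
      rw [inv_lt_comm₀ (by positivity) h1]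
      linarith
  have T1 : Tendsto (fun n => ∫ x in Set.Ioc (ε n) 1, Real.log x * Real.exp (-x)) atTop
      (nhds (∫ x in Set.Ioc (0:ℝ) 1, Real.log x * Real.exp (-x))) := by
    have := tendsto_setIntegral_of_monotone (fun n => measurableSet_Ioc) hmono
      (hunion ▸ EI_int_L0)
    rwa [hunion] at this
  -- limit of boundary term
  have T2 : Tendsto (fun n => Real.log (ε n) * (1 - Real.exp (-ε n))) atTop (nhds 0) := by
    apply squeeze_zero_norm' (a := fun n => |Real.log (ε n) * ε n|)
    · filter_upwards with n
      rw [Real.norm_eq_abs, abs_mul, abs_mul]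
      apply mul_le_mul_of_nonneg_left _ (abs_nonneg _)
      rw [abs_of_nonneg (by nlinarith [Real.exp_zero, Real.exp_le_exp.2 (neg_nonpos.2 (hεpos n).le)]),
        abs_of_pos (hεpos n)]
      nlinarith [Real.add_one_le_exp (-ε n)]
    · have := (tendsto_log_mul_rpow_nhdsGT_zero zero_lt_one).comp hεto
      simp only [Function.comp_def, Real.rpow_one] at this
      simpa using this.abs
  -- limit of G ε n
  have T3 : Tendsto (fun n => ∫ x in (0:ℝ)..(ε n), (Real.exp (-x) - 1) / x) atTop (nhds 0) := by
    apply squeeze_zero_norm' (a := fun n => ε n)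
    · filter_upwards with n
      have := intervalIntegral.norm_integral_le_of_norm_le_const
        (C := 1) (a := (0:ℝ)) (b := ε n) (f := fun x => (Real.exp (-x) - 1) / x) ?_
      · rwa [one_mul, sub_zero, abs_of_pos (hεpos n)] at this
      · intro x hx
        rw [Set.uIoc_of_le (hεpos n).le] at hx
        exact EI_g_bound hx.1.le
    · simpa using hεto.mono_right nhdsWithin_le_nhds
  have key : ∀ n, (∫ x in Set.Ioc (ε n) 1, Real.log x * Real.exp (-x))
      = -(Real.log (ε n) * (1 - Real.exp (-ε n)))
        + ((∫ x in (0:ℝ)..1, (Real.exp (-x) - 1) / x)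
            - ∫ x in (0:ℝ)..(ε n), (Real.exp (-x) - 1) / x) := by
    intro n
    rw [← intervalIntegral.integral_of_le (hε1 n), EI_ibp0 (ε n) (hεpos n) (hε1 n)]
    have := intervalIntegral.integral_add_adjacent_intervals
      (EI_int_g 0 (ε n) le_rfl (hεpos n).le) (EI_int_g (ε n) 1 (hεpos n).le zero_le_one)
    rw [← this]
    ring
  have T4 : Tendsto (fun n => ∫ x in Set.Ioc (ε n) 1, Real.log x * Real.exp (-x)) atTop
      (nhds (-(0:ℝ) + ((∫ x in (0:ℝ)..1, (Real.exp (-x) - 1) / x) - 0))) := by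
    simp only [key]
    exact (T2.neg).add (tendsto_const_nhds.sub T3)
  have := tendsto_nhds_unique T1 T4
  rw [this]
  ring

lemma EI_K5 : (∫ x in Set.Ioi (0:ℝ), Real.log x * Real.exp (-x))
    = -Real.eulerMascheroniConstant := by
  set I : ℝ := ∫ x in Set.Ioi (0:ℝ), Real.log x * Real.exp (-x) with hI
  have h1 : HasDerivAt Complex.GammaIntegral
      (∫ t : ℝ in Set.Ioi 0, (t:ℂ) ^ ((1:ℂ) - 1) * ((Real.log t : ℂ) * (Real.exp (-t) : ℂ))) 1 :=
    Complex.hasDerivAt_GammaIntegral (by simp)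
  have heq : (∫ t : ℝ in Set.Ioi 0, (t:ℂ) ^ ((1:ℂ) - 1) * ((Real.log t : ℂ) * (Real.exp (-t) : ℂ)))
      = (I : ℂ) := by
    have hstep : (∫ t : ℝ in Set.Ioi 0,
        (t:ℂ) ^ ((1:ℂ) - 1) * ((Real.log t : ℂ) * (Real.exp (-t) : ℂ)))
        = ∫ t : ℝ in Set.Ioi 0, ((Real.log t * Real.exp (-t) : ℝ) : ℂ) := by
      apply setIntegral_congr_fun measurableSet_Ioi
      intro x _
      simp [Complex.ofReal_mul]
    rw [hstep, hI]
    exact integral_ofReal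
  rw [heq] at h1
  have h2 : HasDerivAt Complex.Gamma (I : ℂ) 1 := by
    apply h1.congr_of_eventuallyEq
    have hopen : {s : ℂ | 0 < s.re} ∈ nhds (1 : ℂ) := by
      apply IsOpen.mem_nhds
      · exact isOpen_lt continuous_const Complex.continuous_re
      · simp
    filter_upwards [hopen] with s hs
    exact Complex.Gamma_eq_integral hs
  have h3 : HasDerivAt (fun x : ℝ => (Complex.Gamma (x:ℂ)).re) I 1 := by
    have := (show HasDerivAt Complex.Gamma (I:ℂ) ((1:ℝ):ℂ) by simpa using h2).real_of_complex
    simpa using this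
  have h4 : HasDerivAt Real.Gamma I 1 := by
    apply h3.congr_of_eventuallyEq
    filter_upwards with x
    rw [Complex.Gamma_ofReal, Complex.ofReal_re]
  have h5 := Real.hasDerivAt_Gamma_one
  exact h4.unique h5

end EIproofs

open Set Filter in
/-- The exponential integral `f(t) = ∫_t^∞ e^{-x}/x dx` satisfies
`f(t) = -log t - γ - ∫_0^t (e^{-x}-1)/x dx` for `t > 0`. -/
theorem expIntegral_eq_neg_log_sub_eulerMascheroni (t : ℝ) (ht : 0 < t) :
    (∫ x in Set.Ioi t, Real.exp (-x) / x) =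
      -Real.log t - Real.eulerMascheroniConstant -
        ∫ x in (0:ℝ)..t, (Real.exp (-x) - 1) / x := by
  have hsplit : (∫ x in Set.Ioi (0:ℝ), Real.log x * Real.exp (-x))
      = (∫ x in Set.Ioc (0:ℝ) 1, Real.log x * Real.exp (-x))
        + ∫ x in Set.Ioi (1:ℝ), Real.log x * Real.exp (-x) := by
    rw [← Set.Ioc_union_Ioi_eq_Ioi zero_le_one,
      setIntegral_union (Set.Ioc_disjoint_Ioi le_rfl) measurableSet_Ioi EI_int_L0 EI_int_L1]
  have hsum : (∫ x in Set.Ioi 1, Real.exp (-x) / x)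
      + (∫ x in (0:ℝ)..1, (Real.exp (-x) - 1) / x) = -Real.eulerMascheroniConstant := by
    rw [EI_K2, EI_K3, ← EI_K5, hsplit]
    ring
  have h1 := EI_K1 ht
  linarith [h1, hsum]
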